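/- (Lemma 1.) Let n > 3 be an integer, let v be the divergence-conforming B-spline velocity field of order 3 with coefficients φ^X, φ^Y, φ^Z, let M be a nonempty subset of [0,1]³, and let ε ≥ 0. Let J_M be the set of indices i = (i_X,i_Y,i_Z) ∈ {−2,…,n−1}³ such that the product of supports (i_X/n, (i_X+3)/n) × (i_Y/n, (i_Y+3)/n) × (i_Z/n, (i_Z+3)/n) intersects M. If for every i ∈ J_M the quantity |n·(φ^X(i_X,i_Y,i_Z) − φ^X(i_X−1,i_Y,i_Z)) + n·(φ^Y(i_X,i_Y,i_Z) − φ^Y(i_X,i_Y−1,i_Z)) + n·(φ^Z(i_X,i_Y,i_Z) − φ^Z(i_X,i_Y,i_Z−1))| is at most ε, then for every point m ∈ M the divergence of v at m satisfies |div v(m)| ≤ ε. -/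

import Mathlib

/-- The quadratic uniform B-spline. -/
noncomputable def B2 (t : ℝ) : ℝ :=
  if |t| ≤ 1/2 then 3/4 - t^2
  else if |t| ≤ 3/2 then (1/2) * (3/2 - |t|)^2
  else 0

/-- The cubic uniform B-spline. -/
noncomputable def B3 (t : ℝ) : ℝ :=
  if |t| ≤ 1 then (1/6) * (4 - 3*t^2*(2 - |t|))
  else if |t| ≤ 2 then (1/6) * (2 - |t|)^3
  else 0

/-- Order-2 shifted basis function at knot index `j` on the uniform grid of spacing `1/n`. -/
noncomputable def B2j (n : ℤ) (j : ℤ) (u : ℝ) : ℝ :=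
  B2 ((n : ℝ) * u - (j : ℝ) - 3/2)

/-- Order-3 shifted basis function at knot index `j` on the uniform grid of spacing `1/n`. -/
noncomputable def B3j (n : ℤ) (j : ℤ) (u : ℝ) : ℝ :=
  B3 ((n : ℝ) * u - (j : ℝ) - 2)

/-- First component of the divergence-conforming B-spline velocity field of order 3. -/
noncomputable def vX (n : ℤ) (φ : ℤ → ℤ → ℤ → ℝ) (x y z : ℝ) : ℝ :=
  ∑ iX ∈ Finset.Icc (-3 : ℤ) (n-1), ∑ iY ∈ Finset.Icc (-2 : ℤ) (n-1),
    ∑ iZ ∈ Finset.Icc (-2 : ℤ) (n-1),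
      B3j n iX x * B2j n iY y * B2j n iZ z * φ iX iY iZ

/-- Second component of the divergence-conforming B-spline velocity field of order 3. -/
noncomputable def vY (n : ℤ) (φ : ℤ → ℤ → ℤ → ℝ) (x y z : ℝ) : ℝ :=
  ∑ iX ∈ Finset.Icc (-2 : ℤ) (n-1), ∑ iY ∈ Finset.Icc (-3 : ℤ) (n-1),
    ∑ iZ ∈ Finset.Icc (-2 : ℤ) (n-1),
      B2j n iX x * B3j n iY y * B2j n iZ z * φ iX iY iZ

/-- Third component of the divergence-conforming B-spline velocity field of order 3. -/
noncomputable def vZ (n : ℤ) (φ : ℤ → ℤ → ℤ → ℝ) (x y z : ℝ) : ℝ :=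
  ∑ iX ∈ Finset.Icc (-2 : ℤ) (n-1), ∑ iY ∈ Finset.Icc (-2 : ℤ) (n-1),
    ∑ iZ ∈ Finset.Icc (-3 : ℤ) (n-1),
      B2j n iX x * B2j n iY y * B3j n iZ z * φ iX iY iZ

/-- The divergence `∂vX/∂x + ∂vY/∂y + ∂vZ/∂z` of the divergence-conforming B-spline
velocity field at a point `(x, y, z)`. -/
noncomputable def divv (n : ℤ) (φX φY φZ : ℤ → ℤ → ℤ → ℝ) (p : ℝ × ℝ × ℝ) : ℝ :=
  deriv (fun x' : ℝ => vX n φX x' p.2.1 p.2.2) p.1 +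
  deriv (fun y' : ℝ => vY n φY p.1 y' p.2.2) p.2.1 +
  deriv (fun z' : ℝ => vZ n φZ p.1 p.2.1 z') p.2.2

lemma B2_nonneg (t : ℝ) : 0 ≤ B2 t := by
  unfold B2
  split_ifs with h1 h2
  · nlinarith [sq_abs t, abs_nonneg t]
  · positivity
  · exact le_refl 0

lemma B2_zero {t : ℝ} (h : 3/2 ≤ |t|) : B2 t = 0 := by
  unfold B2
  split_ifs with h1 h2
  · linarith
  · have : |t| = 3/2 := le_antisymm h2 h
    rw [this]; norm_num
  · rfl

lemma B2_supp {t : ℝ} (h : B2 t ≠ 0) : |t| < 3/2 := by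
  by_contra hc
  push_neg at hc
  exact h (B2_zero hc)

lemma B2_eq (s : ℝ) : B2 s = (1/2)*(max (s+3/2) 0^2 - 3*max (s+1/2) 0^2 + 3*max (s-1/2) 0^2 - max (s-3/2) 0^2) := by
  unfold B2
  rcases le_or_gt s 0 with hs | hs
  · rw [abs_of_nonpos hs]
    split_ifs with h1 h2
    · rw [max_eq_left (by linarith), max_eq_left (by linarith),
        max_eq_right (by linarith), max_eq_right (by linarith)]
      ring
    · rw [max_eq_left (by linarith), max_eq_right (by linarith),
        max_eq_right (by linarith), max_eq_right (by linarith)]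
      ring
    · rw [max_eq_right (by linarith), max_eq_right (by linarith),
        max_eq_right (by linarith), max_eq_right (by linarith)]
      ring
  · rw [abs_of_pos hs]
    split_ifs with h1 h2
    · rw [max_eq_left (by linarith), max_eq_left (by linarith),
        max_eq_right (by linarith), max_eq_right (by linarith)]
      ring
    · rw [max_eq_left (by linarith), max_eq_left (by linarith),
        max_eq_left (by linarith), max_eq_right (by linarith)]
      ring
    · rw [max_eq_left (by linarith), max_eq_left (by linarith),
        max_eq_left (by linarith), max_eq_left (by linarith)]
      ring

lemma B3_eq (t : ℝ) : B3 t = (1/6)*(max (t+2) 0^3 - 4*max (t+1) 0^3 + 6*max t 0^3 - 4*max (t-1) 0^3 + max (t-2) 0^3) := by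
  unfold B3
  rcases le_or_gt t 0 with hs | hs
  · rw [abs_of_nonpos hs]
    split_ifs with h1 h2
    · rw [max_eq_left (by linarith), max_eq_left (by linarith), max_eq_right hs,
        max_eq_right (by linarith), max_eq_right (by linarith)]
      ring
    · rw [max_eq_left (by linarith), max_eq_right (by linarith), max_eq_right hs,
        max_eq_right (by linarith), max_eq_right (by linarith)]
      ring
    · rw [max_eq_right (by linarith), max_eq_right (by linarith), max_eq_right hs,
        max_eq_right (by linarith), max_eq_right (by linarith)]
      ring
  · rw [abs_of_pos hs]
    split_ifs with h1 h2
    · rw [max_eq_left (by linarith), max_eq_left (by linarith), max_eq_left hs.le,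
        max_eq_right (by linarith), max_eq_right (by linarith)]
      ring
    · rw [max_eq_left (by linarith), max_eq_left (by linarith), max_eq_left hs.le,
        max_eq_left (by linarith), max_eq_right (by linarith)]
      ring
    · rw [max_eq_left (by linarith), max_eq_left (by linarith), max_eq_left hs.le,
        max_eq_left (by linarith), max_eq_left (by linarith)]
      ring

open Filter in
lemma cube_max (t : ℝ) : HasDerivAt (fun x : ℝ => max x 0 ^ 3) (3 * max t 0 ^ 2) t := by
  rcases lt_trichotomy t 0 with h | h | h
  · have h0 : HasDerivAt (fun _ : ℝ => (0:ℝ)) 0 t := hasDerivAt_const t 0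
    have hev : (fun x : ℝ => max x 0 ^ 3) =ᶠ[nhds t] (fun _ => (0:ℝ)) := by
      filter_upwards [Iio_mem_nhds h] with x hx
      simp [max_eq_right (le_of_lt (Set.mem_Iio.mp hx))]
    rw [show (3 : ℝ) * max t 0 ^ 2 = 0 by simp [max_eq_right h.le]]
    exact h0.congr_of_eventuallyEq hev
  · subst h
    rw [show (3:ℝ) * max 0 0 ^ 2 = 0 by norm_num]
    rw [hasDerivAt_iff_tendsto_slope]
    have hg : Tendsto (fun x : ℝ => max x 0 ^ 2) (nhdsWithin 0 {(0:ℝ)}ᶜ) (nhds 0) := by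
      have hc : ContinuousAt (fun x : ℝ => max x 0 ^ 2) 0 :=
        ((continuous_id.max continuous_const).pow 2).continuousAt
      have h2 : Tendsto (fun x : ℝ => max x 0 ^ 2) (nhdsWithin 0 {(0:ℝ)}ᶜ) (nhds ((max 0 0 : ℝ)^2)) :=
        hc.tendsto.mono_left nhdsWithin_le_nhds
      simpa using h2
    refine hg.congr' ?_
    filter_upwards [self_mem_nhdsWithin] with x hx
    have hx0 : x ≠ 0 := hx
    rw [slope_def_field]
    rcases le_or_gt x 0 with h | h
    · rw [max_eq_right h]
      simp
    · rw [max_eq_left h.le]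
      field_simp
      simp
      ring
  · have hev : (fun x : ℝ => max x 0 ^ 3) =ᶠ[nhds t] (fun x : ℝ => x ^ 3) := by
      filter_upwards [Ioi_mem_nhds h] with x hx
      simp [max_eq_left (le_of_lt (Set.mem_Ioi.mp hx))]
    rw [show (3 : ℝ) * max t 0 ^ 2 = 3 * t ^ 2 by rw [max_eq_left h.le]]
    have := hasDerivAt_pow 3 t
    norm_num at this
    exact this.congr_of_eventuallyEq hev

lemma cube_max_shift (a t : ℝ) : HasDerivAt (fun x : ℝ => max (x + a) 0 ^ 3) (3 * max (t + a) 0 ^ 2) t := by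
  have h := (cube_max (t + a)).comp t ((hasDerivAt_id t).add_const a)
  simpa [Function.comp_def] using h

lemma cube_max_shift' (a t : ℝ) : HasDerivAt (fun x : ℝ => max (x - a) 0 ^ 3) (3 * max (t - a) 0 ^ 2) t := by
  have h := (cube_max (t - a)).comp t ((hasDerivAt_id t).sub_const a)
  simpa [Function.comp_def] using h

lemma hasDerivAt_B3 (t : ℝ) : HasDerivAt B3 (B2 (t + 1/2) - B2 (t - 1/2)) t := by
  have h : HasDerivAt
      (fun x : ℝ => (1/6 : ℝ)*(max (x+2) 0^3 - 4*max (x+1) 0^3 + 6*max x 0^3 - 4*max (x-1) 0^3 + max (x-2) 0^3))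
      ((1/6 : ℝ)*(3 * max (t+2) 0 ^ 2 - 4*(3 * max (t+1) 0 ^ 2) + 6*(3 * max t 0 ^ 2)
        - 4*(3 * max (t-1) 0 ^ 2) + 3 * max (t-2) 0 ^ 2)) t := by
    exact (((((cube_max_shift 2 t).sub ((cube_max_shift 1 t).const_mul 4)).add
      ((cube_max t).const_mul 6)).sub ((cube_max_shift' 1 t).const_mul 4)).add
      (cube_max_shift' 2 t)).const_mul (1/6)
  have hf : (fun x : ℝ => (1/6 : ℝ)*(max (x+2) 0^3 - 4*max (x+1) 0^3 + 6*max x 0^3 - 4*max (x-1) 0^3 + max (x-2) 0^3)) = B3 :=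
    funext fun x => (B3_eq x).symm
  rw [hf] at h
  convert h using 1
  rw [B2_eq, B2_eq,
    show t + 1/2 + 3/2 = t + 2 by ring,
    show t + 1/2 + 1/2 = t + 1 by ring,
    show t + 1/2 - 1/2 = t by ring,
    show t + 1/2 - 3/2 = t - 1 by ring,
    show t - 1/2 + 3/2 = t + 1 by ring,
    show t - 1/2 + 1/2 = t by ring,
    show t - 1/2 - 1/2 = t - 1 by ring,
    show t - 1/2 - 3/2 = t - 2 by ring]
  ring

lemma B2_three (u : ℝ) (h1 : -(1/2) ≤ u) (h2 : u ≤ 1/2) :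
    B2 (u + 1) + B2 u + B2 (u - 1) = 1 := by
  have hu : |u| ≤ 1/2 := abs_le.mpr ⟨by linarith, h2⟩
  unfold B2
  rw [abs_of_nonneg (by linarith : (0:ℝ) ≤ u + 1), abs_of_nonpos (by linarith : u - 1 ≤ 0),
    if_pos hu]
  split_ifs with h3 h4 h5 h6 h7 h8 <;>
    first
      | ring1
      | linarith
      | (have hu' : u = -(1/2) := by linarith
         subst hu'
         norm_num)
      | (have hu' : u = 1/2 := by linarith
         subst hu'
         norm_num)

lemma sum_B2_le_one (S : Finset ℤ) (t : ℝ) : ∑ j ∈ S, B2 (t - (j:ℝ)) ≤ 1 := by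
  set k : ℤ := ⌊t + 1/2⌋ with hk
  have hk1 : (k:ℝ) ≤ t + 1/2 := Int.floor_le _
  have hk2 : t + 1/2 < (k:ℝ) + 1 := Int.lt_floor_add_one _
  have key : ∑ j ∈ S ∩ {k-1, k, k+1}, B2 (t - (j:ℝ)) = ∑ j ∈ S, B2 (t - (j:ℝ)) := by
    apply Finset.sum_subset Finset.inter_subset_left
    intro j hjS hj
    have hj3 : j ∉ ({k-1, k, k+1} : Finset ℤ) := fun h => hj (Finset.mem_inter.mpr ⟨hjS, h⟩)
    simp only [Finset.mem_insert, Finset.mem_singleton] at hj3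
    push_neg at hj3
    apply B2_zero
    obtain ⟨ha, hb, hc⟩ := hj3
    have hcase : j ≤ k - 2 ∨ k + 2 ≤ j := by omega
    rcases hcase with h | h
    · have hr : (j:ℝ) ≤ (k:ℝ) - 2 := by exact_mod_cast h
      rw [abs_of_nonneg (by linarith)]
      linarith
    · have hr : (k:ℝ) + 2 ≤ (j:ℝ) := by exact_mod_cast h
      rw [abs_of_nonpos (by linarith)]
      linarith
  rw [← key]
  have h1 : ∑ j ∈ S ∩ {k-1, k, k+1}, B2 (t - (j:ℝ))
      ≤ ∑ j ∈ ({k-1, k, k+1} : Finset ℤ), B2 (t - (j:ℝ)) :=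
    Finset.sum_le_sum_of_subset_of_nonneg Finset.inter_subset_right (fun j _ _ => B2_nonneg _)
  refine h1.trans ?_
  rw [Finset.sum_insert (by simp only [Finset.mem_insert, Finset.mem_singleton]; push_neg; omega),
    Finset.sum_insert (by simp only [Finset.mem_singleton]; omega), Finset.sum_singleton]
  have hthree := B2_three (t - (k:ℝ)) (by linarith) (by linarith)
  push_cast
  rw [show t - ((k:ℝ) - 1) = (t - (k:ℝ)) + 1 by ring,
    show t - ((k:ℝ) + 1) = (t - (k:ℝ)) - 1 by ring]
  linarith

lemma sum_B2j_le_one (n : ℤ) (S : Finset ℤ) (u : ℝ) : ∑ j ∈ S, B2j n j u ≤ 1 := by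
  have h : ∑ j ∈ S, B2j n j u = ∑ j ∈ S, B2 (((n:ℝ)*u - 3/2) - (j:ℝ)) :=
    Finset.sum_congr rfl fun j _ => by unfold B2j; congr 1; ring
  rw [h]
  exact sum_B2_le_one S _

lemma B2j_nonneg (n j : ℤ) (u : ℝ) : 0 ≤ B2j n j u := B2_nonneg _

lemma B2j_mem {n j : ℤ} (hn : 0 < n) {u : ℝ} (h : B2j n j u ≠ 0) :
    (j:ℝ)/(n:ℝ) < u ∧ u < ((j:ℝ)+3)/(n:ℝ) := by
  have h' : B2 ((n:ℝ)*u - (j:ℝ) - 3/2) ≠ 0 := h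
  have hs := B2_supp h'
  rw [abs_lt] at hs
  have hn' : (0:ℝ) < (n:ℝ) := by exact_mod_cast hn
  constructor
  · rw [div_lt_iff₀ hn']
    nlinarith [hs.1]
  · rw [lt_div_iff₀ hn']
    nlinarith [hs.2]

lemma B2j_left {n : ℤ} (hn : 0 < n) {u : ℝ} (hu : 0 ≤ u) : B2j n (-3) u = 0 := by
  have hnu : (0:ℝ) ≤ (n:ℝ)*u := mul_nonneg (by exact_mod_cast hn.le) hu
  unfold B2j
  apply B2_zero
  push_cast
  rw [abs_of_nonneg (by linarith)]
  linarith

lemma B2j_right {n : ℤ} (hn : 0 < n) {u : ℝ} (hu : u ≤ 1) : B2j n n u = 0 := by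
  have hn' : (0:ℝ) < (n:ℝ) := by exact_mod_cast hn
  have hnu : (n:ℝ)*u ≤ (n:ℝ) := by nlinarith
  unfold B2j
  apply B2_zero
  rw [abs_of_nonpos (by linarith)]
  linarith

lemma abel_sum (a b : ℤ) (f g : ℤ → ℝ) (hfa : f a = 0) (hfb : f (b+1) = 0) :
    ∑ i ∈ Finset.Icc a b, (f i - f (i+1)) * g i
      = ∑ i ∈ Finset.Icc (a+1) b, f i * (g i - g (i-1)) := by
  rcases le_or_gt a b with hab | hab
  · have e1 : ∑ i ∈ Finset.Icc a b, (f i - f (i+1)) * g i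
        = ∑ i ∈ Finset.Icc a b, f i * g i - ∑ i ∈ Finset.Icc a b, f (i+1) * g i := by
      rw [← Finset.sum_sub_distrib]
      exact Finset.sum_congr rfl fun i _ => by ring
    have e2 : ∑ i ∈ Finset.Icc a b, f (i+1) * g i
        = ∑ i ∈ Finset.Icc (a+1) (b+1), f i * g (i-1) := by
      rw [← Finset.map_add_right_Icc a b 1, Finset.sum_map]
      refine Finset.sum_congr rfl fun i _ => ?_
      simp [addRightEmbedding_apply]
    have d1 : Finset.Icc a b = insert a (Finset.Icc (a+1) b) := by
      ext i; simp [Finset.mem_Icc, Finset.mem_insert]; omega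
    have d2 : Finset.Icc (a+1) (b+1) = insert (b+1) (Finset.Icc (a+1) b) := by
      ext i; simp [Finset.mem_Icc, Finset.mem_insert]; omega
    rw [e1, e2, d1, d2, Finset.sum_insert (by simp only [Finset.mem_Icc]; omega),
      Finset.sum_insert (by simp only [Finset.mem_Icc]; omega), hfa, hfb]
    simp only [zero_mul, zero_add]
    rw [← Finset.sum_sub_distrib]
    exact Finset.sum_congr rfl fun i _ => by ring
  · rw [Finset.Icc_eq_empty (by omega), Finset.Icc_eq_empty (by omega)]
    simp

lemma hasDerivAt_B3j (n j : ℤ) (u : ℝ) :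
    HasDerivAt (fun u' => B3j n j u') ((n:ℝ) * (B2j n j u - B2j n (j+1) u)) u := by
  have hin : HasDerivAt (fun u' : ℝ => (n:ℝ)*u' - (j:ℝ) - 2) (n:ℝ) u := by
    simpa using (((hasDerivAt_id u).const_mul (n:ℝ)).sub_const (j:ℝ)).sub_const 2
  have h := (hasDerivAt_B3 ((n:ℝ)*u - (j:ℝ) - 2)).comp u hin
  have harg : (B2 ((n:ℝ)*u - (j:ℝ) - 2 + 1/2) - B2 ((n:ℝ)*u - (j:ℝ) - 2 - 1/2)) * (n:ℝ)
      = (n:ℝ) * (B2j n j u - B2j n (j+1) u) := by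
    unfold B2j
    rw [show (n:ℝ)*u - (j:ℝ) - 2 + 1/2 = (n:ℝ)*u - (j:ℝ) - 3/2 by ring,
      show (n:ℝ)*u - (j:ℝ) - 2 - 1/2 = (n:ℝ)*u - ((j+1 : ℤ):ℝ) - 3/2 by push_cast; ring]
    ring
  rw [harg] at h
  exact h

lemma hasDerivAt_vX (n : ℤ) (φ : ℤ → ℤ → ℤ → ℝ) (y z x : ℝ) :
    HasDerivAt (fun x' => vX n φ x' y z)
      (∑ iX ∈ Finset.Icc (-3:ℤ) (n-1), ∑ iY ∈ Finset.Icc (-2:ℤ) (n-1),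
        ∑ iZ ∈ Finset.Icc (-2:ℤ) (n-1),
        (n:ℝ) * (B2j n iX x - B2j n (iX+1) x) * B2j n iY y * B2j n iZ z * φ iX iY iZ) x := by
  unfold vX
  apply HasDerivAt.fun_sum
  intro iX _
  apply HasDerivAt.fun_sum
  intro iY _
  apply HasDerivAt.fun_sum
  intro iZ _
  exact (((hasDerivAt_B3j n iX x).mul_const (B2j n iY y)).mul_const (B2j n iZ z)).mul_const
    (φ iX iY iZ)

lemma hasDerivAt_vY (n : ℤ) (φ : ℤ → ℤ → ℤ → ℝ) (x z y : ℝ) :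
    HasDerivAt (fun y' => vY n φ x y' z)
      (∑ iX ∈ Finset.Icc (-2:ℤ) (n-1), ∑ iY ∈ Finset.Icc (-3:ℤ) (n-1),
        ∑ iZ ∈ Finset.Icc (-2:ℤ) (n-1),
        B2j n iX x * ((n:ℝ) * (B2j n iY y - B2j n (iY+1) y)) * B2j n iZ z * φ iX iY iZ) y := by
  unfold vY
  apply HasDerivAt.fun_sum
  intro iX _
  apply HasDerivAt.fun_sum
  intro iY _
  apply HasDerivAt.fun_sum
  intro iZ _
  exact (((hasDerivAt_B3j n iY y).const_mul (B2j n iX x)).mul_const (B2j n iZ z)).mul_const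
    (φ iX iY iZ)

lemma hasDerivAt_vZ (n : ℤ) (φ : ℤ → ℤ → ℤ → ℝ) (x y z : ℝ) :
    HasDerivAt (fun z' => vZ n φ x y z')
      (∑ iX ∈ Finset.Icc (-2:ℤ) (n-1), ∑ iY ∈ Finset.Icc (-2:ℤ) (n-1),
        ∑ iZ ∈ Finset.Icc (-3:ℤ) (n-1),
        B2j n iX x * B2j n iY y * ((n:ℝ) * (B2j n iZ z - B2j n (iZ+1) z)) * φ iX iY iZ) z := by
  unfold vZ
  apply HasDerivAt.fun_sum
  intro iX _
  apply HasDerivAt.fun_sum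
  intro iY _
  apply HasDerivAt.fun_sum
  intro iZ _
  exact ((hasDerivAt_B3j n iZ z).const_mul (B2j n iX x * B2j n iY y)).mul_const (φ iX iY iZ)

lemma key1 (n : ℤ) (hn : 3 < n) {x : ℝ} (hx0 : 0 ≤ x) (hx1 : x ≤ 1) (c : ℤ → ℝ) :
    ∑ i ∈ Finset.Icc (-3:ℤ) (n-1), (B2j n i x - B2j n (i+1) x) * c i
      = ∑ i ∈ Finset.Icc (-2:ℤ) (n-1), B2j n i x * (c i - c (i-1)) := by
  have hn0 : (0:ℤ) < n := by omega
  have h := abel_sum (-3) (n-1) (fun i => B2j n i x) c (B2j_left hn0 hx0)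
    (by rw [show (n-1+1 : ℤ) = n by ring]; exact B2j_right hn0 hx1)
  rw [show ((-3:ℤ)+1) = -2 by norm_num] at h
  exact h

lemma derivX (n : ℤ) (hn : 3 < n) (φ : ℤ → ℤ → ℤ → ℝ) {x : ℝ} (y z : ℝ)
    (hx0 : 0 ≤ x) (hx1 : x ≤ 1) :
    deriv (fun x' => vX n φ x' y z) x
      = ∑ iX ∈ Finset.Icc (-2:ℤ) (n-1), ∑ iY ∈ Finset.Icc (-2:ℤ) (n-1),
          ∑ iZ ∈ Finset.Icc (-2:ℤ) (n-1),
          B2j n iX x * B2j n iY y * B2j n iZ z * ((n:ℝ) * (φ iX iY iZ - φ (iX-1) iY iZ)) := by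
  rw [(hasDerivAt_vX n φ y z x).deriv]
  have step : ∀ iY iZ : ℤ,
      (∑ iX ∈ Finset.Icc (-3:ℤ) (n-1),
        (n:ℝ) * (B2j n iX x - B2j n (iX+1) x) * B2j n iY y * B2j n iZ z * φ iX iY iZ)
      = ∑ iX ∈ Finset.Icc (-2:ℤ) (n-1),
          B2j n iX x * B2j n iY y * B2j n iZ z * ((n:ℝ) * (φ iX iY iZ - φ (iX-1) iY iZ)) := by
    intro iY iZ
    have h1 : (∑ iX ∈ Finset.Icc (-3:ℤ) (n-1),
        (n:ℝ) * (B2j n iX x - B2j n (iX+1) x) * B2j n iY y * B2j n iZ z * φ iX iY iZ)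
        = ∑ iX ∈ Finset.Icc (-3:ℤ) (n-1),
          (B2j n iX x - B2j n (iX+1) x) * ((n:ℝ) * (B2j n iY y * B2j n iZ z * φ iX iY iZ)) :=
      Finset.sum_congr rfl fun i _ => by ring
    have h2 := key1 n hn hx0 hx1 (fun i => (n:ℝ) * (B2j n iY y * B2j n iZ z * φ i iY iZ))
    have h3 : (∑ i ∈ Finset.Icc (-2:ℤ) (n-1),
        B2j n i x * ((fun i => (n:ℝ) * (B2j n iY y * B2j n iZ z * φ i iY iZ)) i
          - (fun i => (n:ℝ) * (B2j n iY y * B2j n iZ z * φ i iY iZ)) (i-1)))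
        = ∑ iX ∈ Finset.Icc (-2:ℤ) (n-1),
          B2j n iX x * B2j n iY y * B2j n iZ z * ((n:ℝ) * (φ iX iY iZ - φ (iX-1) iY iZ)) :=
      Finset.sum_congr rfl fun i _ => by simp only []; ring
    exact h1.trans (h2.trans h3)
  calc (∑ iX ∈ Finset.Icc (-3:ℤ) (n-1), ∑ iY ∈ Finset.Icc (-2:ℤ) (n-1),
        ∑ iZ ∈ Finset.Icc (-2:ℤ) (n-1),
        (n:ℝ) * (B2j n iX x - B2j n (iX+1) x) * B2j n iY y * B2j n iZ z * φ iX iY iZ)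
      = ∑ iY ∈ Finset.Icc (-2:ℤ) (n-1), ∑ iX ∈ Finset.Icc (-3:ℤ) (n-1),
        ∑ iZ ∈ Finset.Icc (-2:ℤ) (n-1),
        (n:ℝ) * (B2j n iX x - B2j n (iX+1) x) * B2j n iY y * B2j n iZ z * φ iX iY iZ :=
      Finset.sum_comm
    _ = ∑ iY ∈ Finset.Icc (-2:ℤ) (n-1), ∑ iZ ∈ Finset.Icc (-2:ℤ) (n-1),
        ∑ iX ∈ Finset.Icc (-3:ℤ) (n-1),
        (n:ℝ) * (B2j n iX x - B2j n (iX+1) x) * B2j n iY y * B2j n iZ z * φ iX iY iZ :=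
      Finset.sum_congr rfl fun iY _ => Finset.sum_comm
    _ = ∑ iY ∈ Finset.Icc (-2:ℤ) (n-1), ∑ iZ ∈ Finset.Icc (-2:ℤ) (n-1),
        ∑ iX ∈ Finset.Icc (-2:ℤ) (n-1),
          B2j n iX x * B2j n iY y * B2j n iZ z * ((n:ℝ) * (φ iX iY iZ - φ (iX-1) iY iZ)) :=
      Finset.sum_congr rfl fun iY _ => Finset.sum_congr rfl fun iZ _ => step iY iZ
    _ = ∑ iY ∈ Finset.Icc (-2:ℤ) (n-1), ∑ iX ∈ Finset.Icc (-2:ℤ) (n-1),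
        ∑ iZ ∈ Finset.Icc (-2:ℤ) (n-1),
          B2j n iX x * B2j n iY y * B2j n iZ z * ((n:ℝ) * (φ iX iY iZ - φ (iX-1) iY iZ)) :=
      Finset.sum_congr rfl fun iY _ => Finset.sum_comm
    _ = ∑ iX ∈ Finset.Icc (-2:ℤ) (n-1), ∑ iY ∈ Finset.Icc (-2:ℤ) (n-1),
        ∑ iZ ∈ Finset.Icc (-2:ℤ) (n-1),
          B2j n iX x * B2j n iY y * B2j n iZ z * ((n:ℝ) * (φ iX iY iZ - φ (iX-1) iY iZ)) :=
      Finset.sum_comm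

lemma derivY (n : ℤ) (hn : 3 < n) (φ : ℤ → ℤ → ℤ → ℝ) (x : ℝ) {y : ℝ} (z : ℝ)
    (hy0 : 0 ≤ y) (hy1 : y ≤ 1) :
    deriv (fun y' => vY n φ x y' z) y
      = ∑ iX ∈ Finset.Icc (-2:ℤ) (n-1), ∑ iY ∈ Finset.Icc (-2:ℤ) (n-1),
          ∑ iZ ∈ Finset.Icc (-2:ℤ) (n-1),
          B2j n iX x * B2j n iY y * B2j n iZ z * ((n:ℝ) * (φ iX iY iZ - φ iX (iY-1) iZ)) := by
  rw [(hasDerivAt_vY n φ x z y).deriv]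
  refine Finset.sum_congr rfl fun iX _ => ?_
  have step : ∀ iZ : ℤ,
      (∑ iY ∈ Finset.Icc (-3:ℤ) (n-1),
        B2j n iX x * ((n:ℝ) * (B2j n iY y - B2j n (iY+1) y)) * B2j n iZ z * φ iX iY iZ)
      = ∑ iY ∈ Finset.Icc (-2:ℤ) (n-1),
          B2j n iX x * B2j n iY y * B2j n iZ z * ((n:ℝ) * (φ iX iY iZ - φ iX (iY-1) iZ)) := by
    intro iZ
    have h1 : (∑ iY ∈ Finset.Icc (-3:ℤ) (n-1),
        B2j n iX x * ((n:ℝ) * (B2j n iY y - B2j n (iY+1) y)) * B2j n iZ z * φ iX iY iZ)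
        = ∑ iY ∈ Finset.Icc (-3:ℤ) (n-1),
          (B2j n iY y - B2j n (iY+1) y) * ((n:ℝ) * (B2j n iX x * B2j n iZ z * φ iX iY iZ)) :=
      Finset.sum_congr rfl fun i _ => by ring
    have h2 := key1 n hn hy0 hy1 (fun i => (n:ℝ) * (B2j n iX x * B2j n iZ z * φ iX i iZ))
    have h3 : (∑ i ∈ Finset.Icc (-2:ℤ) (n-1),
        B2j n i y * ((fun i => (n:ℝ) * (B2j n iX x * B2j n iZ z * φ iX i iZ)) i
          - (fun i => (n:ℝ) * (B2j n iX x * B2j n iZ z * φ iX i iZ)) (i-1)))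
        = ∑ iY ∈ Finset.Icc (-2:ℤ) (n-1),
          B2j n iX x * B2j n iY y * B2j n iZ z * ((n:ℝ) * (φ iX iY iZ - φ iX (iY-1) iZ)) :=
      Finset.sum_congr rfl fun i _ => by simp only []; ring
    exact h1.trans (h2.trans h3)
  calc (∑ iY ∈ Finset.Icc (-3:ℤ) (n-1), ∑ iZ ∈ Finset.Icc (-2:ℤ) (n-1),
        B2j n iX x * ((n:ℝ) * (B2j n iY y - B2j n (iY+1) y)) * B2j n iZ z * φ iX iY iZ)
      = ∑ iZ ∈ Finset.Icc (-2:ℤ) (n-1), ∑ iY ∈ Finset.Icc (-3:ℤ) (n-1),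
        B2j n iX x * ((n:ℝ) * (B2j n iY y - B2j n (iY+1) y)) * B2j n iZ z * φ iX iY iZ :=
      Finset.sum_comm
    _ = ∑ iZ ∈ Finset.Icc (-2:ℤ) (n-1), ∑ iY ∈ Finset.Icc (-2:ℤ) (n-1),
          B2j n iX x * B2j n iY y * B2j n iZ z * ((n:ℝ) * (φ iX iY iZ - φ iX (iY-1) iZ)) :=
      Finset.sum_congr rfl fun iZ _ => step iZ
    _ = ∑ iY ∈ Finset.Icc (-2:ℤ) (n-1), ∑ iZ ∈ Finset.Icc (-2:ℤ) (n-1),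
          B2j n iX x * B2j n iY y * B2j n iZ z * ((n:ℝ) * (φ iX iY iZ - φ iX (iY-1) iZ)) :=
      Finset.sum_comm

lemma derivZ (n : ℤ) (hn : 3 < n) (φ : ℤ → ℤ → ℤ → ℝ) (x y : ℝ) {z : ℝ}
    (hz0 : 0 ≤ z) (hz1 : z ≤ 1) :
    deriv (fun z' => vZ n φ x y z') z
      = ∑ iX ∈ Finset.Icc (-2:ℤ) (n-1), ∑ iY ∈ Finset.Icc (-2:ℤ) (n-1),
          ∑ iZ ∈ Finset.Icc (-2:ℤ) (n-1),
          B2j n iX x * B2j n iY y * B2j n iZ z * ((n:ℝ) * (φ iX iY iZ - φ iX iY (iZ-1))) := by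
  rw [(hasDerivAt_vZ n φ x y z).deriv]
  refine Finset.sum_congr rfl fun iX _ => ?_
  refine Finset.sum_congr rfl fun iY _ => ?_
  have h1 : (∑ iZ ∈ Finset.Icc (-3:ℤ) (n-1),
      B2j n iX x * B2j n iY y * ((n:ℝ) * (B2j n iZ z - B2j n (iZ+1) z)) * φ iX iY iZ)
      = ∑ iZ ∈ Finset.Icc (-3:ℤ) (n-1),
        (B2j n iZ z - B2j n (iZ+1) z) * ((n:ℝ) * (B2j n iX x * B2j n iY y * φ iX iY iZ)) :=
    Finset.sum_congr rfl fun i _ => by ring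
  have h2 := key1 n hn hz0 hz1 (fun i => (n:ℝ) * (B2j n iX x * B2j n iY y * φ iX iY i))
  have h3 : (∑ i ∈ Finset.Icc (-2:ℤ) (n-1),
      B2j n i z * ((fun i => (n:ℝ) * (B2j n iX x * B2j n iY y * φ iX iY i)) i
        - (fun i => (n:ℝ) * (B2j n iX x * B2j n iY y * φ iX iY i)) (i-1)))
      = ∑ iZ ∈ Finset.Icc (-2:ℤ) (n-1),
        B2j n iX x * B2j n iY y * B2j n iZ z * ((n:ℝ) * (φ iX iY iZ - φ iX iY (iZ-1))) :=
    Finset.sum_congr rfl fun i _ => by simp only []; ring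
  exact h1.trans (h2.trans h3)

/-- **Lemma 1.** If the scaled finite differences of the coefficients are bounded by `ε`
in absolute value for all indices whose basis-function support box meets `M`, then the
divergence of the velocity field is bounded by `ε` at every point of `M`. -/
theorem lemma1 (n : ℤ) (hn : 3 < n) (φX φY φZ : ℤ → ℤ → ℤ → ℝ)
    (hφX : ∀ iX iY iZ : ℤ,
      ¬(iX ∈ Finset.Icc (-3 : ℤ) (n-1) ∧ iY ∈ Finset.Icc (-2 : ℤ) (n-1) ∧
        iZ ∈ Finset.Icc (-2 : ℤ) (n-1)) → φX iX iY iZ = 0)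
    (hφY : ∀ iX iY iZ : ℤ,
      ¬(iX ∈ Finset.Icc (-2 : ℤ) (n-1) ∧ iY ∈ Finset.Icc (-3 : ℤ) (n-1) ∧
        iZ ∈ Finset.Icc (-2 : ℤ) (n-1)) → φY iX iY iZ = 0)
    (hφZ : ∀ iX iY iZ : ℤ,
      ¬(iX ∈ Finset.Icc (-2 : ℤ) (n-1) ∧ iY ∈ Finset.Icc (-2 : ℤ) (n-1) ∧
        iZ ∈ Finset.Icc (-3 : ℤ) (n-1)) → φZ iX iY iZ = 0)
    (M : Set (ℝ × ℝ × ℝ)) (hM : M.Nonempty)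
    (hMΩ : M ⊆ Set.Icc (0:ℝ) 1 ×ˢ (Set.Icc (0:ℝ) 1 ×ˢ Set.Icc (0:ℝ) 1))
    (ε : ℝ) (hε : 0 ≤ ε)
    (hcon : ∀ iX iY iZ : ℤ, iX ∈ Finset.Icc (-2 : ℤ) (n-1) →
      iY ∈ Finset.Icc (-2 : ℤ) (n-1) → iZ ∈ Finset.Icc (-2 : ℤ) (n-1) →
      ((Set.Ioo ((iX : ℝ)/n) (((iX : ℝ)+3)/n) ×ˢ
        (Set.Ioo ((iY : ℝ)/n) (((iY : ℝ)+3)/n) ×ˢ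
         Set.Ioo ((iZ : ℝ)/n) (((iZ : ℝ)+3)/n))) ∩ M).Nonempty →
      |(n : ℝ) * (φX iX iY iZ - φX (iX - 1) iY iZ) +
       (n : ℝ) * (φY iX iY iZ - φY iX (iY - 1) iZ) +
       (n : ℝ) * (φZ iX iY iZ - φZ iX iY (iZ - 1))| ≤ ε) :
    ∀ m ∈ M, |divv n φX φY φZ m| ≤ ε := by
  intro m hm
  obtain ⟨x, y, z⟩ := m
  obtain ⟨hx, hy, hz⟩ := hMΩ hm
  obtain ⟨hx0, hx1⟩ := hx
  obtain ⟨hy0, hy1⟩ := hy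
  obtain ⟨hz0, hz1⟩ := hz
  have hn0 : (0:ℤ) < n := by omega
  set D : ℤ → ℤ → ℤ → ℝ := fun iX iY iZ =>
    (n : ℝ) * (φX iX iY iZ - φX (iX - 1) iY iZ) +
    (n : ℝ) * (φY iX iY iZ - φY iX (iY - 1) iZ) +
    (n : ℝ) * (φZ iX iY iZ - φZ iX iY (iZ - 1)) with hD
  have hdiv : divv n φX φY φZ (x, y, z)
      = ∑ iX ∈ Finset.Icc (-2:ℤ) (n-1), ∑ iY ∈ Finset.Icc (-2:ℤ) (n-1),
          ∑ iZ ∈ Finset.Icc (-2:ℤ) (n-1),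
          B2j n iX x * B2j n iY y * B2j n iZ z * D iX iY iZ := by
    have hdef : divv n φX φY φZ (x, y, z)
        = deriv (fun x' : ℝ => vX n φX x' y z) x + deriv (fun y' : ℝ => vY n φY x y' z) y +
          deriv (fun z' : ℝ => vZ n φZ x y z') z := rfl
    rw [hdef, derivX n hn φX y z hx0 hx1, derivY n hn φY x z hy0 hy1,
      derivZ n hn φZ x y hz0 hz1, ← Finset.sum_add_distrib, ← Finset.sum_add_distrib]
    refine Finset.sum_congr rfl fun iX _ => ?_
    rw [← Finset.sum_add_distrib, ← Finset.sum_add_distrib]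
    refine Finset.sum_congr rfl fun iY _ => ?_
    rw [← Finset.sum_add_distrib, ← Finset.sum_add_distrib]
    refine Finset.sum_congr rfl fun iZ _ => ?_
    rw [hD]
    ring
  rw [hdiv]
  have hterm : ∀ iX ∈ Finset.Icc (-2:ℤ) (n-1), ∀ iY ∈ Finset.Icc (-2:ℤ) (n-1),
      ∀ iZ ∈ Finset.Icc (-2:ℤ) (n-1),
      |B2j n iX x * B2j n iY y * B2j n iZ z * D iX iY iZ|
        ≤ B2j n iX x * B2j n iY y * B2j n iZ z * ε := by
    intro iX hiX iY hiY iZ hiZ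
    have hW0 : 0 ≤ B2j n iX x * B2j n iY y * B2j n iZ z :=
      mul_nonneg (mul_nonneg (B2j_nonneg n iX x) (B2j_nonneg n iY y)) (B2j_nonneg n iZ z)
    by_cases hW : B2j n iX x * B2j n iY y * B2j n iZ z = 0
    · rw [hW, zero_mul, abs_zero, zero_mul]
    · obtain ⟨h1, hz'⟩ := mul_ne_zero_iff.mp hW
      obtain ⟨hx', hy'⟩ := mul_ne_zero_iff.mp h1
      obtain ⟨hxl, hxr⟩ := B2j_mem hn0 hx'
      obtain ⟨hyl, hyr⟩ := B2j_mem hn0 hy'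
      obtain ⟨hzl, hzr⟩ := B2j_mem hn0 hz'
      have hne : ((Set.Ioo ((iX : ℝ)/n) (((iX : ℝ)+3)/n) ×ˢ
          (Set.Ioo ((iY : ℝ)/n) (((iY : ℝ)+3)/n) ×ˢ
           Set.Ioo ((iZ : ℝ)/n) (((iZ : ℝ)+3)/n))) ∩ M).Nonempty :=
        ⟨(x, y, z), ⟨⟨⟨hxl, hxr⟩, ⟨hyl, hyr⟩, ⟨hzl, hzr⟩⟩, hm⟩⟩
      have hDb : |D iX iY iZ| ≤ ε := hcon iX iY iZ hiX hiY hiZ hne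
      calc |B2j n iX x * B2j n iY y * B2j n iZ z * D iX iY iZ|
          = B2j n iX x * B2j n iY y * B2j n iZ z * |D iX iY iZ| := by
            rw [abs_mul, abs_of_nonneg hW0]
        _ ≤ B2j n iX x * B2j n iY y * B2j n iZ z * ε :=
            mul_le_mul_of_nonneg_left hDb hW0
  have habs : |∑ iX ∈ Finset.Icc (-2:ℤ) (n-1), ∑ iY ∈ Finset.Icc (-2:ℤ) (n-1),
      ∑ iZ ∈ Finset.Icc (-2:ℤ) (n-1), B2j n iX x * B2j n iY y * B2j n iZ z * D iX iY iZ|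
      ≤ ∑ iX ∈ Finset.Icc (-2:ℤ) (n-1), ∑ iY ∈ Finset.Icc (-2:ℤ) (n-1),
        ∑ iZ ∈ Finset.Icc (-2:ℤ) (n-1),
        |B2j n iX x * B2j n iY y * B2j n iZ z * D iX iY iZ| := by
    refine (Finset.abs_sum_le_sum_abs _ _).trans (Finset.sum_le_sum fun iX _ => ?_)
    refine (Finset.abs_sum_le_sum_abs _ _).trans (Finset.sum_le_sum fun iY _ => ?_)
    exact Finset.abs_sum_le_sum_abs _ _
  refine habs.trans ?_
  have h2 : (∑ iX ∈ Finset.Icc (-2:ℤ) (n-1), ∑ iY ∈ Finset.Icc (-2:ℤ) (n-1),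
      ∑ iZ ∈ Finset.Icc (-2:ℤ) (n-1),
      |B2j n iX x * B2j n iY y * B2j n iZ z * D iX iY iZ|)
      ≤ ∑ iX ∈ Finset.Icc (-2:ℤ) (n-1), ∑ iY ∈ Finset.Icc (-2:ℤ) (n-1),
        ∑ iZ ∈ Finset.Icc (-2:ℤ) (n-1), B2j n iX x * B2j n iY y * B2j n iZ z * ε := by
    refine Finset.sum_le_sum fun iX hiX => Finset.sum_le_sum fun iY hiY =>
      Finset.sum_le_sum fun iZ hiZ => hterm iX hiX iY hiY iZ hiZ
  refine h2.trans ?_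
  have h3 : (∑ iX ∈ Finset.Icc (-2:ℤ) (n-1), ∑ iY ∈ Finset.Icc (-2:ℤ) (n-1),
      ∑ iZ ∈ Finset.Icc (-2:ℤ) (n-1), B2j n iX x * B2j n iY y * B2j n iZ z * ε)
      = (∑ iX ∈ Finset.Icc (-2:ℤ) (n-1), B2j n iX x)
        * (∑ iY ∈ Finset.Icc (-2:ℤ) (n-1), B2j n iY y)
        * (∑ iZ ∈ Finset.Icc (-2:ℤ) (n-1), B2j n iZ z) * ε := by
    have e1 : ∀ iX iY : ℤ, (∑ iZ ∈ Finset.Icc (-2:ℤ) (n-1),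
        B2j n iX x * B2j n iY y * B2j n iZ z * ε)
        = B2j n iX x * B2j n iY y * (∑ iZ ∈ Finset.Icc (-2:ℤ) (n-1), B2j n iZ z) * ε := by
      intro iX iY
      rw [← Finset.sum_mul, ← Finset.mul_sum]
    have e2 : ∀ iX : ℤ, (∑ iY ∈ Finset.Icc (-2:ℤ) (n-1),
        B2j n iX x * B2j n iY y * (∑ iZ ∈ Finset.Icc (-2:ℤ) (n-1), B2j n iZ z) * ε)
        = B2j n iX x * (∑ iY ∈ Finset.Icc (-2:ℤ) (n-1), B2j n iY y)
          * (∑ iZ ∈ Finset.Icc (-2:ℤ) (n-1), B2j n iZ z) * ε := by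
      intro iX
      rw [← Finset.sum_mul, ← Finset.sum_mul, ← Finset.mul_sum]
    calc (∑ iX ∈ Finset.Icc (-2:ℤ) (n-1), ∑ iY ∈ Finset.Icc (-2:ℤ) (n-1),
        ∑ iZ ∈ Finset.Icc (-2:ℤ) (n-1), B2j n iX x * B2j n iY y * B2j n iZ z * ε)
        = ∑ iX ∈ Finset.Icc (-2:ℤ) (n-1), B2j n iX x
            * (∑ iY ∈ Finset.Icc (-2:ℤ) (n-1), B2j n iY y)
            * (∑ iZ ∈ Finset.Icc (-2:ℤ) (n-1), B2j n iZ z) * ε :=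
          Finset.sum_congr rfl fun iX _ =>
            (Finset.sum_congr rfl fun iY _ => e1 iX iY).trans (e2 iX)
      _ = (∑ iX ∈ Finset.Icc (-2:ℤ) (n-1), B2j n iX x)
            * (∑ iY ∈ Finset.Icc (-2:ℤ) (n-1), B2j n iY y)
            * (∑ iZ ∈ Finset.Icc (-2:ℤ) (n-1), B2j n iZ z) * ε := by
          rw [← Finset.sum_mul, ← Finset.sum_mul, ← Finset.sum_mul]
  rw [h3]
  have hsx0 : 0 ≤ ∑ iX ∈ Finset.Icc (-2:ℤ) (n-1), B2j n iX x :=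
    Finset.sum_nonneg fun i _ => B2j_nonneg n i x
  have hsy0 : 0 ≤ ∑ iY ∈ Finset.Icc (-2:ℤ) (n-1), B2j n iY y :=
    Finset.sum_nonneg fun i _ => B2j_nonneg n i y
  have hsz0 : 0 ≤ ∑ iZ ∈ Finset.Icc (-2:ℤ) (n-1), B2j n iZ z :=
    Finset.sum_nonneg fun i _ => B2j_nonneg n i z
  have hsx1 := sum_B2j_le_one n (Finset.Icc (-2:ℤ) (n-1)) x
  have hsy1 := sum_B2j_le_one n (Finset.Icc (-2:ℤ) (n-1)) y
  have hsz1 := sum_B2j_le_one n (Finset.Icc (-2:ℤ) (n-1)) z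
  have h5 : (∑ iX ∈ Finset.Icc (-2:ℤ) (n-1), B2j n iX x)
      * (∑ iY ∈ Finset.Icc (-2:ℤ) (n-1), B2j n iY y)
      * (∑ iZ ∈ Finset.Icc (-2:ℤ) (n-1), B2j n iZ z) ≤ 1 := by
    have hxy : (∑ iX ∈ Finset.Icc (-2:ℤ) (n-1), B2j n iX x)
        * (∑ iY ∈ Finset.Icc (-2:ℤ) (n-1), B2j n iY y) ≤ 1 := mul_le_one₀ hsx1 hsy0 hsy1
    exact mul_le_one₀ hxy hsz0 hsz1
  calc (∑ iX ∈ Finset.Icc (-2:ℤ) (n-1), B2j n iX x)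
      * (∑ iY ∈ Finset.Icc (-2:ℤ) (n-1), B2j n iY y)
      * (∑ iZ ∈ Finset.Icc (-2:ℤ) (n-1), B2j n iZ z) * ε
      ≤ 1 * ε := mul_le_mul_of_nonneg_right h5 hε
    _ = ε := one_mul ε
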